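/- Let p be prime and n an integer with p ≤ n < 2p. For the S_n-action on ℤ_(p)[x_1,…,x_n] by permuting variables, Tr(x_1⋯x_j) = j!(n−j)! e_j; consequently e_j lies in the image of the transfer map whenever both j ≤ p−1 and n − j ≤ p−1. -/

import Mathlib

open MvPolynomial

/-- The prime ideal `(p)` of `ℤ`. -/
abbrev pIdeal (p : ℕ) : Ideal ℤ := Ideal.span {(p : ℤ)}

instance pIdeal_isPrime (p : ℕ) [hp : Fact p.Prime] : (pIdeal p).IsPrime :=
  (Ideal.span_singleton_prime (by exact_mod_cast hp.out.ne_zero)).mpr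
    (Nat.prime_iff_prime_int.mp hp.out)

/-- `ℤ_(p)`, the localization of `ℤ` at the prime `p`. -/
abbrev Zp (p : ℕ) [Fact p.Prime] : Type := Localization.AtPrime (pIdeal p)


open Finset Equiv


lemma aux_card_S0 (n j : ℕ) (hj : j ≤ n) :
    (Finset.univ.filter (fun t : Fin n => (t : ℕ) < j)).card = j := by
  have : (Finset.univ.filter (fun t : Fin n => (t : ℕ) < j))
      = (Finset.range j).attachFin (fun m hm => lt_of_lt_of_le (Finset.mem_range.mp hm) hj) := by
    ext t
    simp [Finset.mem_attachFin]
  rw [this, Finset.card_attachFin, Finset.card_range]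

lemma aux_image_exists {n : ℕ} (S₀ S : Finset (Fin n)) (h : S₀.card = S.card) :
    ∃ τ : Equiv.Perm (Fin n), S₀.image ⇑τ = S := by
  classical
  let e : {x // x ∈ S₀} ≃ {x // x ∈ S} := Finset.equivOfCardEq h
  refine ⟨e.extendSubtype, ?_⟩
  apply Finset.eq_of_subset_of_card_le
  · intro x hx
    obtain ⟨y, hy, rfl⟩ := Finset.mem_image.mp hx
    exact e.extendSubtype_mem y hy
  · rw [Finset.card_image_of_injective _ e.extendSubtype.injective, h]

lemma aux_fiber_card_const {n : ℕ} (S₀ S : Finset (Fin n)) (h : S₀.card = S.card) :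
    (Finset.univ.filter fun σ : Equiv.Perm (Fin n) => S₀.image ⇑σ = S).card
      = (Finset.univ.filter fun σ : Equiv.Perm (Fin n) => S₀.image ⇑σ = S₀).card := by
  classical
  obtain ⟨τ, hτ⟩ := aux_image_exists S₀ S h
  apply Finset.card_bij (fun σ _ => τ⁻¹ * σ)
  · intro σ hσ
    simp only [Finset.mem_filter, Finset.mem_univ, true_and] at hσ ⊢
    rw [Equiv.Perm.coe_mul, ← Finset.image_image, hσ, ← hτ, Finset.image_image]
    have : ⇑τ⁻¹ ∘ ⇑τ = id := by ext x; simp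
    rw [this, Finset.image_id]
  · intro a _ b _ hab
    exact mul_left_cancel hab
  · intro ν hν
    simp only [Finset.mem_filter, Finset.mem_univ, true_and] at hν
    refine ⟨τ * ν, ?_, by group⟩
    simp only [Finset.mem_filter, Finset.mem_univ, true_and, Equiv.Perm.coe_mul,
      ← Finset.image_image, hν, hτ]

lemma aux_fiber_card {n j : ℕ} (hj : j ≤ n) (S : Finset (Fin n))
    (hS : S ∈ Finset.powersetCard j (Finset.univ : Finset (Fin n))) :
    (Finset.univ.filter fun σ : Equiv.Perm (Fin n) =>
        (Finset.univ.filter (fun t : Fin n => (t : ℕ) < j)).image ⇑σ = S).card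
      = j.factorial * (n - j).factorial := by
  classical
  set S₀ := Finset.univ.filter (fun t : Fin n => (t : ℕ) < j) with hS₀
  have hcS₀ : S₀.card = j := aux_card_S0 n j hj
  obtain ⟨-, hcS⟩ := Finset.mem_powersetCard.mp hS
  -- the common fiber cardinality
  set c := (Finset.univ.filter fun σ : Equiv.Perm (Fin n) => S₀.image ⇑σ = S₀).card with hc
  have hfib : ∀ T ∈ Finset.powersetCard j (Finset.univ : Finset (Fin n)),
      (Finset.univ.filter fun σ : Equiv.Perm (Fin n) => S₀.image ⇑σ = T).card = c := by
    intro T hT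
    obtain ⟨-, hcT⟩ := Finset.mem_powersetCard.mp hT
    exact aux_fiber_card_const S₀ T (hcS₀.trans hcT.symm)
  have htotal : (Finset.univ : Finset (Equiv.Perm (Fin n))).card
      = ∑ T ∈ Finset.powersetCard j (Finset.univ : Finset (Fin n)),
          (Finset.univ.filter fun σ : Equiv.Perm (Fin n) => S₀.image ⇑σ = T).card := by
    apply Finset.card_eq_sum_card_fiberwise
    intro σ _
    simp only [Finset.mem_coe, Finset.mem_powersetCard]
    exact ⟨Finset.subset_univ _, by
      rw [Finset.card_image_of_injective _ σ.injective, hcS₀]⟩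
  rw [Finset.sum_congr rfl hfib, Finset.sum_const, Finset.card_powersetCard,
    Finset.card_fin, Finset.card_univ, Fintype.card_perm, Fintype.card_fin, smul_eq_mul] at htotal
  have hkey : n.choose j * c = n.choose j * (j.factorial * (n - j).factorial) := by
    rw [← htotal, ← mul_assoc, Nat.choose_mul_factorial_mul_factorial hj]
  have := Nat.eq_of_mul_eq_mul_left (Nat.choose_pos hj) hkey
  rw [hfib S hS, this]

lemma aux_trace {R : Type*} [CommRing R] (n j : ℕ) (hj : j ≤ n) :
    (∑ σ : Equiv.Perm (Fin n),
        rename (⇑σ) (∏ t ∈ Finset.univ.filter (fun t : Fin n => (t : ℕ) < j), X t)) =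
      C (((j.factorial * (n - j).factorial : ℕ) : R)) * esymm (Fin n) R j := by
  classical
  set S₀ := Finset.univ.filter (fun t : Fin n => (t : ℕ) < j) with hS₀
  have step1 : ∀ σ : Equiv.Perm (Fin n),
      rename (⇑σ) (∏ t ∈ S₀, (X t : MvPolynomial (Fin n) R)) = ∏ t ∈ S₀.image ⇑σ, X t := by
    intro σ
    rw [map_prod, Finset.prod_image (fun a _ b _ h => σ.injective h)]
    simp [rename_X]
  rw [Finset.sum_congr rfl (fun σ _ => step1 σ)]
  rw [← Finset.sum_fiberwise_of_maps_to (g := fun σ : Equiv.Perm (Fin n) => S₀.image ⇑σ)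
      (t := Finset.powersetCard j (Finset.univ : Finset (Fin n)))
      (fun σ _ => Finset.mem_powersetCard.mpr ⟨Finset.subset_univ _,
        by rw [Finset.card_image_of_injective _ σ.injective, aux_card_S0 n j hj]⟩)]
  have : ∀ S ∈ Finset.powersetCard j (Finset.univ : Finset (Fin n)),
      ∑ σ ∈ Finset.univ.filter (fun σ : Equiv.Perm (Fin n) => S₀.image ⇑σ = S),
          ∏ t ∈ S₀.image ⇑σ, (X t : MvPolynomial (Fin n) R)
        = (j.factorial * (n - j).factorial) • ∏ t ∈ S, (X t : MvPolynomial (Fin n) R) := by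
    intro S hS
    rw [Finset.sum_congr rfl (fun σ hσ => by
        rw [(Finset.mem_filter.mp hσ).2]), Finset.sum_const, aux_fiber_card hj S hS]
  rw [Finset.sum_congr rfl this, ← Finset.smul_sum, esymm, nsmul_eq_mul]
  rw [← C_eq_coe_nat]

/-- Let `p` be prime and `p ≤ n < 2p`.  For the `S_n`-action on
`ℤ_(p)[x_1,…,x_n]` by permuting variables, `Tr(x_1⋯x_j) = j!(n−j)! e_j`; consequently `e_j`
lies in the image of the transfer map whenever both `j ≤ p−1` and `n − j ≤ p−1`. -/
theorem transfer_of_squarefree_monomial (p : ℕ) [Fact p.Prime] (n : ℕ)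
    (hn : p ≤ n) (hn' : n < 2 * p) (j : ℕ) (hj : j ≤ n) :
    (∑ σ : Equiv.Perm (Fin n),
        rename (⇑σ) (∏ t ∈ Finset.univ.filter (fun t : Fin n => (t : ℕ) < j), X t) =
      C (((j.factorial * (n - j).factorial : ℕ) : Zp p)) * esymm (Fin n) (Zp p) j) ∧
    (j ≤ p - 1 → n - j ≤ p - 1 →
      ∃ f : MvPolynomial (Fin n) (Zp p),
        ∑ σ : Equiv.Perm (Fin n), rename (⇑σ) f = esymm (Fin n) (Zp p) j) := by
  have h1 := aux_trace (R := Zp p) n j hj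
  refine ⟨h1, fun hjp hnjp => ?_⟩
  have hp2 : 2 ≤ p := (Fact.out : p.Prime).two_le
  have hdvd : ¬ (p ∣ j.factorial * (n - j).factorial) := by
    intro h
    rcases (Nat.Prime.dvd_mul Fact.out).mp h with h | h
    · exact absurd ((Nat.Prime.dvd_factorial Fact.out).mp h) (by omega)
    · exact absurd ((Nat.Prime.dvd_factorial Fact.out).mp h) (by omega)
  have hunit : IsUnit (((j.factorial * (n - j).factorial : ℕ) : Zp p)) := by
    have heq : (((j.factorial * (n - j).factorial : ℕ) : Zp p))
        = algebraMap ℤ (Zp p) ((j.factorial * (n - j).factorial : ℕ) : ℤ) := by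
      push_cast
      simp
    rw [heq, IsLocalization.AtPrime.isUnit_to_map_iff (Zp p) (pIdeal p)]
    exact fun hmem => hdvd (Int.natCast_dvd_natCast.mp (Ideal.mem_span_singleton.mp hmem))
  refine ⟨C (↑hunit.unit⁻¹ : Zp p) *
      ∏ t ∈ Finset.univ.filter (fun t : Fin n => (t : ℕ) < j), X t, ?_⟩
  have hren : ∀ σ : Equiv.Perm (Fin n),
      rename (⇑σ) (C (↑hunit.unit⁻¹ : Zp p) *
        ∏ t ∈ Finset.univ.filter (fun t : Fin n => (t : ℕ) < j), X t)
      = C (↑hunit.unit⁻¹ : Zp p) *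
          rename (⇑σ) (∏ t ∈ Finset.univ.filter (fun t : Fin n => (t : ℕ) < j), X t) :=
    fun σ => by rw [map_mul, rename_C]
  rw [Finset.sum_congr rfl (fun σ _ => hren σ), ← Finset.mul_sum, h1, ← mul_assoc, ← C_mul,
    IsUnit.val_inv_mul, C_1, one_mul]
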